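/- If $k$ is an increasing function on $[-1,1]$, $u \in S^n$, and $f: S^n \to \mathbb{R}$ is radial symmetric and decreasing with respect to $u$, then the function $T_k f(x) = \int_{S^n} k(x\cdot y) f(y)\, d\mu(y)$ is also radial symmetric and decreasing with respect to $u$. -/

import Mathlib

open MeasureTheory Metric Set
open scoped RealInnerProductSpace NNReal ENNReal

noncomputable section

-- cube in EuclideanSpace ℝ (Fin m) has finite μH[d] for d = m... we need d = n for cube in Fin n
lemma cube_finite (n : ℕ) :
    μH[(n : ℝ)] {y : EuclideanSpace ℝ (Fin n) | ∀ j, |y j| ≤ 1} < ⊤ := by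
  set Cpi : Set (Fin n → ℝ) := {y | ∀ j, |y j| ≤ 1} with hCpi
  have hcomp : IsCompact Cpi := by
    have : Cpi = Set.pi Set.univ (fun _ => Icc (-1 : ℝ) 1) := by
      ext y; simp [hCpi, abs_le, Set.mem_pi, forall_and, Pi.le_def]
    rw [this]
    exact isCompact_univ_pi fun _ => isCompact_Icc
  have hvol : μH[(n : ℝ)] Cpi < ⊤ := by
    have h1 : (μH[(n : ℝ)] : Measure (Fin n → ℝ)) = volume := by
      have := MeasureTheory.hausdorffMeasure_pi_real (ι := Fin n)
      simpa using this
    rw [h1]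
    exact hcomp.measure_lt_top
  -- the identity map pi → EuclideanSpace is Lipschitz with constant √n
  have hanti := PiLp.antilipschitzWith_ofLp 2 (fun _ : Fin n => ℝ)
  have hlip : LipschitzWith ((Fintype.card (Fin n) : ℝ≥0) ^ (1 / (2:ℝ≥0∞)).toReal)
      (WithLp.equiv 2 (Fin n → ℝ)).symm :=
    hanti.to_rightInverse (Equiv.rightInverse_symm _)
  have himg : {y : EuclideanSpace ℝ (Fin n) | ∀ j, |y j| ≤ 1} =
      (WithLp.equiv 2 (Fin n → ℝ)).symm '' Cpi := by
    ext y
    constructor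
    · intro hy; exact ⟨(WithLp.equiv 2 (Fin n → ℝ)) y, hy, rfl⟩
    · rintro ⟨z, hz, rfl⟩; exact hz
  rw [himg]
  calc μH[(n:ℝ)] ((WithLp.equiv 2 (Fin n → ℝ)).symm '' Cpi)
      ≤ (((Fintype.card (Fin n) : ℝ≥0) ^ (1 / (2:ℝ≥0∞)).toReal : ℝ≥0) : ℝ≥0∞) ^ (n:ℝ) * μH[(n:ℝ)] Cpi :=
        hlip.hausdorffMeasure_image_le (by positivity) Cpi
    _ < ⊤ := by
        apply ENNReal.mul_lt_top _ hvol
        exact ENNReal.rpow_lt_top_of_nonneg (by positivity) ENNReal.coe_ne_top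

-- coordinate bound
lemma coord_le_norm {m : ℕ} (x : EuclideanSpace ℝ (Fin m)) (i : Fin m) : |x i| ≤ ‖x‖ := by
  have h1 : ‖(WithLp.equiv 2 (Fin m → ℝ)) x‖ ≤ ‖x‖ := by
    have := (PiLp.lipschitzWith_ofLp 2 (fun _ : Fin m => ℝ)).dist_le_mul x 0
    simpa [dist_eq_norm] using this
  calc |x i| ≤ ‖(WithLp.equiv 2 (Fin m → ℝ)) x‖ := by
        simpa using norm_le_pi_norm ((WithLp.equiv 2 (Fin m → ℝ)) x) i
    _ ≤ ‖x‖ := h1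

lemma face_isometry (n : ℕ) (i : Fin (n + 1)) (ε : ℝ) :
    Isometry (fun y : EuclideanSpace ℝ (Fin n) =>
      ((WithLp.equiv 2 (Fin (n+1) → ℝ)).symm (i.insertNth ε ((WithLp.equiv 2 (Fin n → ℝ)) y)) :
        EuclideanSpace ℝ (Fin (n+1)))) := by
  apply Isometry.of_dist_eq
  intro a b
  rw [EuclideanSpace.dist_eq, EuclideanSpace.dist_eq]
  congr 1
  rw [Fin.sum_univ_succAbove _ i]
  simp [Fin.insertNth_apply_same, Fin.insertNth_apply_succAbove]

lemma proj_lipschitz {E : Type*} [NormedAddCommGroup E] [NormedSpace ℝ E] :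
    LipschitzOnWith 2 (fun x : E => ‖x‖⁻¹ • x) {x : E | 1 ≤ ‖x‖} := by
  apply LipschitzOnWith.of_dist_le_mul
  intro x hx y hy
  simp only [Set.mem_setOf_eq] at hx hy
  have hx0 : (0:ℝ) < ‖x‖ := lt_of_lt_of_le one_pos hx
  have hy0 : (0:ℝ) < ‖y‖ := lt_of_lt_of_le one_pos hy
  rw [dist_eq_norm, dist_eq_norm]
  have h1 : ‖x‖⁻¹ • x - ‖y‖⁻¹ • y = (‖x‖⁻¹ • (x - y)) + ((‖x‖⁻¹ - ‖y‖⁻¹) • y) := by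
    rw [smul_sub, sub_smul]; abel
  rw [h1]
  have h2 : ‖‖x‖⁻¹ • (x - y)‖ ≤ ‖x - y‖ := by
    rw [norm_smul, norm_inv, norm_norm]
    calc ‖x‖⁻¹ * ‖x - y‖ ≤ 1 * ‖x - y‖ := by
          apply mul_le_mul_of_nonneg_right _ (norm_nonneg _)
          rw [inv_le_one_iff₀]; right; exact hx
      _ = ‖x - y‖ := one_mul _
  have h3 : ‖(‖x‖⁻¹ - ‖y‖⁻¹) • y‖ ≤ ‖x - y‖ := by
    rw [norm_smul, Real.norm_eq_abs]
    have : ‖x‖⁻¹ - ‖y‖⁻¹ = (‖y‖ - ‖x‖) / (‖x‖ * ‖y‖) := by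
      field_simp
    rw [this, abs_div, abs_of_pos (mul_pos hx0 hy0)]
    rw [div_mul_eq_mul_div]
    rw [div_le_iff₀ (mul_pos hx0 hy0)]
    have h4 : |‖y‖ - ‖x‖| ≤ ‖x - y‖ := by
      rw [abs_sub_comm]; exact abs_norm_sub_norm_le x y
    calc |‖y‖ - ‖x‖| * ‖y‖ ≤ ‖x - y‖ * ‖y‖ :=
          mul_le_mul_of_nonneg_right h4 (norm_nonneg _)
      _ ≤ ‖x - y‖ * (‖x‖ * ‖y‖) := by
          apply mul_le_mul_of_nonneg_left _ (norm_nonneg _)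
          nlinarith
  calc ‖(‖x‖⁻¹ • (x - y)) + ((‖x‖⁻¹ - ‖y‖⁻¹) • y)‖
      ≤ ‖‖x‖⁻¹ • (x - y)‖ + ‖(‖x‖⁻¹ - ‖y‖⁻¹) • y‖ := norm_add_le _ _
    _ ≤ ‖x - y‖ + ‖x - y‖ := add_le_add h2 h3
    _ = 2 * ‖x - y‖ := by ring

lemma sphere_hausdorff_finite (n : ℕ) :
    μH[(n : ℝ)] (sphere (0 : EuclideanSpace ℝ (Fin (n + 1))) 1) < ⊤ := by
  classical
  set Cn : Set (EuclideanSpace ℝ (Fin n)) := {y | ∀ j, |y j| ≤ 1} with hCn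
  set g : Fin (n+1) → ℝ → EuclideanSpace ℝ (Fin n) → EuclideanSpace ℝ (Fin (n+1)) :=
    fun i ε y => (WithLp.equiv 2 (Fin (n+1) → ℝ)).symm
      (i.insertNth ε ((WithLp.equiv 2 (Fin n → ℝ)) y)) with hg
  set A : Set (EuclideanSpace ℝ (Fin (n+1))) :=
    ⋃ p : Fin (n+1) × Bool, g p.1 (if p.2 then 1 else -1) '' Cn with hA
  have hAfin : μH[(n : ℝ)] A < ⊤ := by
    rw [hA]
    calc μH[(n:ℝ)] (⋃ p : Fin (n+1) × Bool, g p.1 (if p.2 then 1 else -1) '' Cn)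
        ≤ ∑ p : Fin (n+1) × Bool, μH[(n:ℝ)] (g p.1 (if p.2 then 1 else -1) '' Cn) :=
          measure_iUnion_fintype_le _ _
      _ < ⊤ := by
          apply ENNReal.sum_lt_top.mpr
          intro p _
          rw [(face_isometry n p.1 _).hausdorffMeasure_image (Or.inl (by positivity))]
          exact cube_finite n
  have hA1 : A ⊆ {x | 1 ≤ ‖x‖} := by
    rintro x hx
    rw [hA] at hx
    obtain ⟨p, y, hy, rfl⟩ := Set.mem_iUnion.mp hx
    have : |(g p.1 (if p.2 then 1 else -1) y) p.1| = 1 := by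
      simp only [hg, Fin.insertNth_apply_same]
      split_ifs <;> norm_num
    calc (1:ℝ) = |(g p.1 (if p.2 then 1 else -1) y) p.1| := this.symm
      _ ≤ ‖g p.1 (if p.2 then 1 else -1) y‖ := coord_le_norm _ _
  have hsub : sphere (0 : EuclideanSpace ℝ (Fin (n + 1))) 1 ⊆ (fun x => ‖x‖⁻¹ • x) '' A := by
    intro x hx
    rw [mem_sphere_zero_iff_norm] at hx
    obtain ⟨i, -, hi⟩ := Finset.exists_max_image Finset.univ (fun j => |x j|)
      ⟨0, Finset.mem_univ 0⟩
    have ht : 0 < |x i| := by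
      rcases lt_or_eq_of_le (abs_nonneg (x i)) with h | h
      · exact h
      · exfalso
        have : x = 0 := by
          ext j
          have := hi j (Finset.mem_univ j)
          rw [← h] at this
          simpa using le_antisymm this (abs_nonneg _)
        rw [this] at hx; simp at hx
    set t := |x i| with htdef
    refine ⟨t⁻¹ • x, ?_, ?_⟩
    · rw [hA]
      apply Set.mem_iUnion.mpr
      refine ⟨(i, decide (0 ≤ x i)), ?_⟩
      refine ⟨WithLp.toLp 2 (fun j => (t⁻¹ • x) (i.succAbove j)), fun j => ?_, ?_⟩
      · show |(t⁻¹ • x) (i.succAbove j)| ≤ 1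
        have : (t⁻¹ • x) (i.succAbove j) = t⁻¹ * x (i.succAbove j) := rfl
        rw [this, abs_mul, abs_inv, abs_of_pos ht]
        rw [inv_mul_le_one₀ ht]
        exact hi _ (Finset.mem_univ _)
      · show g i _ _ = t⁻¹ • x
        rw [hg]
        have hval : (if decide (0 ≤ x i) = true then (1:ℝ) else -1) = (t⁻¹ • x) i := by
          have : (t⁻¹ • x) i = t⁻¹ * x i := rfl
          rw [this]
          rcases le_or_gt 0 (x i) with h | h
          · simp only [decide_eq_true_eq, if_pos h]
            rw [htdef, abs_of_nonneg h] at ht ⊢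
            field_simp
          · simp only [decide_eq_true_eq, if_neg (not_le.mpr h)]
            rw [htdef, abs_of_neg h] at ht ⊢
            field_simp
            rw [div_self h.ne]
        rw [hval]
        apply (WithLp.equiv 2 (Fin (n+1) → ℝ)).symm_apply_eq.mpr
        exact (Fin.insertNth_self_removeNth i _).symm ▸ rfl
    · show ‖t⁻¹ • x‖⁻¹ • t⁻¹ • x = x
      rw [norm_smul, norm_inv, Real.norm_eq_abs, abs_of_pos ht, hx, mul_one,
        inv_inv, smul_smul]
      rw [mul_inv_cancel₀ (ne_of_gt ht), one_smul]
  calc μH[(n:ℝ)] (sphere (0 : EuclideanSpace ℝ (Fin (n + 1))) 1)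
      ≤ μH[(n:ℝ)] ((fun x => ‖x‖⁻¹ • x) '' A) := measure_mono hsub
    _ ≤ (2:ℝ≥0) ^ (n:ℝ) * μH[(n:ℝ)] A :=
        (proj_lipschitz.mono hA1).hausdorffMeasure_image_le (by positivity)
    _ < ⊤ := ENNReal.mul_lt_top
        (ENNReal.rpow_lt_top_of_nonneg (by positivity) ENNReal.coe_ne_top) hAfin

section Reflection

variable {E : Type*} [NormedAddCommGroup E] [InnerProductSpace ℝ E]

/-- Reflection across the hyperplane orthogonal to `w`. -/
def reflMap (w x : E) : E := x - (2 * ⟪x, w⟫) • w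

lemma reflMap_inner (w x y : E) : ⟪reflMap w x, y⟫ = ⟪x, y⟫ - 2 * ⟪x, w⟫ * ⟪w, y⟫ := by
  simp [reflMap, inner_sub_left, inner_smul_left]

lemma reflMap_inner_w {w : E} (hw : ‖w‖ = 1) (x : E) : ⟪reflMap w x, w⟫ = -⟪x, w⟫ := by
  have h1 : ⟪w, w⟫ = (1:ℝ) := by
    rw [real_inner_self_eq_norm_sq, hw]; norm_num
  rw [reflMap_inner, h1]; ring

lemma reflMap_invol {w : E} (hw : ‖w‖ = 1) (x : E) : reflMap w (reflMap w x) = x := by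
  rw [reflMap, reflMap_inner_w hw, reflMap]
  rw [show (2 * -⟪x, w⟫) • w = -((2 * ⟪x, w⟫) • w) by rw [← neg_smul]; ring_nf]
  abel

lemma reflMap_sub (w x y : E) : reflMap w x - reflMap w y = reflMap w (x - y) := by
  simp only [reflMap, inner_sub_left, smul_sub, sub_smul]
  rw [show (2 * (⟪x,w⟫ - ⟪y,w⟫)) • w = (2*⟪x,w⟫) • w - (2*⟪y,w⟫) • w by
    rw [← sub_smul]; ring_nf]
  abel

lemma reflMap_norm {w : E} (hw : ‖w‖ = 1) (x : E) : ‖reflMap w x‖ = ‖x‖ := by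
  have hsq : ‖reflMap w x‖ ^ 2 = ‖x‖ ^ 2 := by
    rw [reflMap, norm_sub_sq_real, inner_smul_right, norm_smul]
    rw [Real.norm_eq_abs, mul_pow, sq_abs, hw]
    ring
  have := congrArg Real.sqrt hsq
  rwa [Real.sqrt_sq (norm_nonneg _), Real.sqrt_sq (norm_nonneg _)] at this

/-- Reflection as an isometry equivalence. -/
def reflIso (w : E) (hw : ‖w‖ = 1) : E ≃ᵢ E where
  toFun := reflMap w
  invFun := reflMap w
  left_inv := reflMap_invol hw
  right_inv := reflMap_invol hw
  isometry_toFun := Isometry.of_dist_eq fun x y => by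
    rw [dist_eq_norm, dist_eq_norm, reflMap_sub, reflMap_norm hw]

lemma reflMap_swap {w : E} (x y : E) : ⟪reflMap w x, y⟫ = ⟪x, reflMap w y⟫ := by
  simp only [reflMap, inner_sub_left, inner_sub_right, inner_smul_left, inner_smul_right,
    RCLike.ofReal_real_eq_id, id_eq]
  rw [real_inner_comm y w]
  simp only [starRingEnd_apply, star_trivial]
  ring

end Reflection

section Clamp

/-- clamp to [-1,1] -/
def clampI (t : ℝ) : ℝ := max (-1) (min t 1)

lemma clampI_monotone : Monotone clampI := fun a b hab =>
  max_le_max le_rfl (min_le_min hab le_rfl)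

lemma clampI_mem (t : ℝ) : clampI t ∈ Icc (-1 : ℝ) 1 := by
  constructor
  · exact le_max_left _ _
  · exact max_le (by norm_num) (min_le_right _ _)

lemma clampI_eq {t : ℝ} (ht : t ∈ Icc (-1 : ℝ) 1) : clampI t = t := by
  rw [clampI, min_eq_left ht.2, max_eq_right ht.1]

lemma ext_monotone {k : ℝ → ℝ} (hk : MonotoneOn k (Icc (-1 : ℝ) 1)) :
    Monotone (k ∘ clampI) := fun a b hab =>
  hk (clampI_mem a) (clampI_mem b) (clampI_monotone hab)

lemma ext_bound {k : ℝ → ℝ} (hk : MonotoneOn k (Icc (-1 : ℝ) 1)) (t : ℝ) :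
    |(k ∘ clampI) t| ≤ max |k (-1)| |k 1| := by
  have h1 : k (-1) ≤ k (clampI t) :=
    hk (by norm_num) (clampI_mem t) (clampI_mem t).1
  have h2 : k (clampI t) ≤ k 1 :=
    hk (clampI_mem t) (by norm_num) (clampI_mem t).2
  rw [abs_le]
  constructor
  · calc -(max |k (-1)| |k 1|) ≤ -|k (-1)| := by
          simp only [neg_le_neg_iff]; exact le_max_left _ _
      _ ≤ k (-1) := neg_abs_le _
      _ ≤ (k ∘ clampI) t := h1
  · calc (k ∘ clampI) t ≤ k 1 := h2
      _ ≤ |k 1| := le_abs_self _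
      _ ≤ max |k (-1)| |k 1| := le_max_right _ _

end Clamp

section Key

local notation "E'" n => EuclideanSpace ℝ (Fin (n + 1))

set_option maxHeartbeats 1000000 in
lemma key_mono (n : ℕ) (k : ℝ → ℝ) (hk : MonotoneOn k (Icc (-1 : ℝ) 1))
    (u : E' n) (hu : ‖u‖ = 1) (f : (E' n) → ℝ) (φ : ℝ → ℝ) (hφ : MonotoneOn φ (Icc (-1 : ℝ) 1))
    (hfφ : ∀ x ∈ sphere (0 : E' n) 1, f x = φ ⟪x, u⟫)
    {x1 x2 : E' n} (h1 : x1 ∈ sphere (0 : E' n) 1) (h2 : x2 ∈ sphere (0 : E' n) 1)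
    (hle : ⟪x1, u⟫ ≤ ⟪x2, u⟫) :
    (∫ y in sphere (0 : E' n) 1, k ⟪x1, y⟫ * f y ∂μH[(n : ℝ)]) ≤
      ∫ y in sphere (0 : E' n) 1, k ⟪x2, y⟫ * f y ∂μH[(n : ℝ)] := by
  classical
  by_cases hx12 : x1 = x2
  · rw [hx12]
  set S := sphere (0 : E' n) 1 with hS
  have hSmeas : MeasurableSet S := (isClosed_sphere).measurableSet
  have hSfin : μH[(n : ℝ)] S < ⊤ := sphere_hausdorff_finite n
  rw [mem_sphere_zero_iff_norm] at h1 h2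
  -- extended kernels
  set k' : ℝ → ℝ := k ∘ clampI with hk'def
  set φ' : ℝ → ℝ := φ ∘ clampI with hφ'def
  have hk'mono : Monotone k' := ext_monotone hk
  have hφ'mono : Monotone φ' := ext_monotone hφ
  have hk'meas : Measurable k' := hk'mono.measurable
  have hφ'meas : Measurable φ' := hφ'mono.measurable
  set Bk := max |k (-1)| |k 1| with hBk
  set Bφ := max |φ (-1)| |φ 1| with hBφ
  have hk'bd : ∀ t, |k' t| ≤ Bk := ext_bound hk
  have hφ'bd : ∀ t, |φ' t| ≤ Bφ := ext_bound hφ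
  -- inner products of unit vectors lie in [-1,1]
  have hIcc : ∀ a b : E' n, ‖a‖ = 1 → ‖b‖ = 1 → ⟪a, b⟫ ∈ Icc (-1 : ℝ) 1 := by
    intro a b ha hb
    have := abs_real_inner_le_norm a b
    rw [ha, hb, mul_one, abs_le] at this
    exact this
  -- reflection setup
  set c := ‖x2 - x1‖ with hc
  have hcpos : 0 < c := by
    rw [hc, norm_pos_iff, sub_ne_zero]
    exact fun h => hx12 h.symm
  set w : E' n := c⁻¹ • (x2 - x1) with hwdef
  have hw : ‖w‖ = 1 := by
    rw [hwdef, norm_smul, norm_inv, Real.norm_eq_abs, abs_of_pos hcpos, ← hc,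
      inv_mul_cancel₀ hcpos.ne']
  have hcsq : c ^ 2 = 2 - 2 * ⟪x2, x1⟫ := by
    rw [hc, norm_sub_sq_real, h1, h2]; ring
  have hx1w : 2 * ⟪x1, w⟫ = -c := by
    rw [hwdef, inner_smul_right, inner_sub_right, real_inner_self_eq_norm_sq, h1]
    rw [real_inner_comm x1 x2] at hcsq
    have hc0 : c ≠ 0 := hcpos.ne'
    have h6 : ⟪x1, x2⟫ - 1 ^ 2 = -(c ^ 2) / 2 := by linarith
    rw [h6]
    field_simp
  have hRx1 : reflMap w x1 = x2 := by
    rw [reflMap, hx1w, neg_smul, sub_neg_eq_add, hwdef, smul_smul,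
      mul_inv_cancel₀ hcpos.ne', one_smul]
    abel
  have hRx2 : reflMap w x2 = x1 := by
    rw [← hRx1, reflMap_invol hw]
  have hwu : 0 ≤ ⟪w, u⟫ := by
    rw [hwdef, inner_smul_left, inner_sub_left]
    simp only [RCLike.ofReal_real_eq_id, id_eq, starRingEnd_apply, star_trivial]
    have : (0:ℝ) ≤ c⁻¹ := (inv_pos.mpr hcpos).le
    have h5 : (0:ℝ) ≤ ⟪x2,u⟫ - ⟪x1,u⟫ := sub_nonneg.mpr hle
    positivity
  have hdiff : ∀ y : E' n, ⟪x2, y⟫ - ⟪x1, y⟫ = c * ⟪w, y⟫ := by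
    intro y
    rw [hwdef, inner_smul_left]
    simp only [starRingEnd_apply, star_trivial]
    rw [inner_sub_left]
    field_simp
  have hRu : ∀ y : E' n, ⟪y, u⟫ - ⟪reflMap w y, u⟫ = 2 * ⟪y, w⟫ * ⟪w, u⟫ := by
    intro y
    rw [reflMap_inner]; ring
  -- continuity/measurability helpers
  have hinner_cont : ∀ z : E' n, Continuous fun y : E' n => ⟪y, z⟫ :=
    fun z => continuous_id.inner continuous_const
  have hinner_cont' : ∀ z : E' n, Continuous fun y : E' n => ⟪z, y⟫ :=
    fun z => continuous_const.inner continuous_id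
  have hRcont : Continuous (reflMap w) := by
    apply Continuous.sub continuous_id
    exact (continuous_const.mul (hinner_cont w)).smul continuous_const
  -- the nice integrands
  set I : (E' n) → (E' n) → ℝ := fun x y => k' ⟪x, y⟫ * φ' ⟪y, u⟫ with hI
  have hImeas : ∀ x, Measurable (I x) := by
    intro x
    exact ((hk'meas.comp (hinner_cont' x).measurable).mul
      (hφ'meas.comp (hinner_cont u).measurable))
  have hIbd : ∀ x y, |I x y| ≤ Bk * Bφ := by
    intro x y
    rw [hI]
    calc |k' ⟪x,y⟫ * φ' ⟪y,u⟫| = |k' ⟪x,y⟫| * |φ' ⟪y,u⟫| := abs_mul _ _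
      _ ≤ Bk * Bφ := by
          apply mul_le_mul (hk'bd _) (hφ'bd _) (abs_nonneg _)
          exact le_trans (abs_nonneg _) (hk'bd 0)
  have hIeq : ∀ x, ‖x‖ = 1 → ∀ y ∈ S, k ⟪x, y⟫ * f y = I x y := by
    intro x hx y hy
    have hyn : ‖y‖ = 1 := mem_sphere_zero_iff_norm.mp hy
    rw [hI, hk'def, hφ'def, hfφ y hy]
    simp only [Function.comp_apply]
    rw [clampI_eq (hIcc x y hx hyn), clampI_eq (hIcc y u hyn hu)]
  have hrw : ∀ x, ‖x‖ = 1 →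
      (∫ y in S, k ⟪x, y⟫ * f y ∂μH[(n:ℝ)]) = ∫ y in S, I x y ∂μH[(n:ℝ)] := by
    intro x hx
    exact setIntegral_congr_fun hSmeas (fun y hy => hIeq x hx y hy)
  rw [hrw x1 h1, hrw x2 h2]
  -- uniform integrability principle
  have hint : ∀ (B : ℝ) (g : (E' n) → ℝ), Measurable g → (∀ y, |g y| ≤ B) →
      ∀ s : Set (E' n), s ⊆ S → IntegrableOn g s μH[(n:ℝ)] := by
    intro B g hg hb s hs
    have hfin : μH[(n:ℝ)] s < ⊤ := lt_of_le_of_lt (measure_mono hs) hSfin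
    refine Integrable.mono'
      (integrableOn_const (C := B) hfin.ne)
      hg.aestronglyMeasurable (ae_of_all _ ?_)
    intro y
    rw [Real.norm_eq_abs]
    exact hb y
  set D : (E' n) → ℝ := fun y => I x2 y - I x1 y with hD
  set DR : (E' n) → ℝ := fun y => D (reflMap w y) with hDR
  have hDmeas : Measurable D := (hImeas x2).sub (hImeas x1)
  have hDRmeas : Measurable DR := hDmeas.comp hRcont.measurable
  have hDbd : ∀ y, |D y| ≤ Bk * Bφ + Bk * Bφ := by
    intro y
    calc |D y| = ‖I x2 y - I x1 y‖ := rfl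
      _ ≤ ‖I x2 y‖ + ‖I x1 y‖ := norm_sub_le _ _
      _ ≤ Bk * Bφ + Bk * Bφ := add_le_add (hIbd x2 y) (hIbd x1 y)
  have hDRbd : ∀ y, |DR y| ≤ Bk * Bφ + Bk * Bφ := fun y => hDbd _
  -- the three pieces of the sphere
  set Sp := S ∩ (fun y : E' n => ⟪y, w⟫) ⁻¹' (Ioi 0) with hSpdef
  set S0 := S ∩ (fun y : E' n => ⟪y, w⟫) ⁻¹' {0} with hS0def
  set Sm := S ∩ (fun y : E' n => ⟪y, w⟫) ⁻¹' (Iio 0) with hSmdef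
  have hSpm : MeasurableSet Sp :=
    hSmeas.inter ((hinner_cont w).measurable measurableSet_Ioi)
  have hS0m : MeasurableSet S0 :=
    hSmeas.inter ((hinner_cont w).measurable (measurableSet_singleton 0))
  have hSmm : MeasurableSet Sm :=
    hSmeas.inter ((hinner_cont w).measurable measurableSet_Iio)
  have hSpS : Sp ⊆ S := inter_subset_left
  have hS0S : S0 ⊆ S := inter_subset_left
  have hSmS : Sm ⊆ S := inter_subset_left
  have hpart : S = (Sp ∪ Sm) ∪ S0 := by
    ext y
    simp only [hSpdef, hS0def, hSmdef, mem_union, mem_inter_iff, mem_preimage,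
      mem_Ioi, mem_Iio, mem_singleton_iff]
    constructor
    · intro hy
      rcases lt_trichotomy (⟪y, w⟫ : ℝ) 0 with h | h | h
      · exact Or.inl (Or.inr ⟨hy, h⟩)
      · exact Or.inr ⟨hy, h⟩
      · exact Or.inl (Or.inl ⟨hy, h⟩)
    · rintro ((⟨h, -⟩ | ⟨h, -⟩) | ⟨h, -⟩) <;> exact h
  have hdisj1 : Disjoint Sp Sm := by
    rw [Set.disjoint_left]
    rintro y ⟨-, hy1⟩ ⟨-, hy2⟩
    simp only [mem_preimage, mem_Ioi] at hy1
    simp only [mem_preimage, mem_Iio] at hy2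
    linarith
  have hdisj2 : Disjoint (Sp ∪ Sm) S0 := by
    rw [Set.disjoint_left]
    rintro y (⟨-, hy1⟩ | ⟨-, hy1⟩) ⟨-, hy2⟩ <;>
      · simp only [mem_preimage, mem_Ioi, mem_Iio] at hy1
        simp only [mem_preimage, mem_singleton_iff] at hy2
        linarith
  -- reflection maps Sp onto Sm
  have hmemS : ∀ y ∈ S, reflMap w y ∈ S := by
    intro y hy
    rw [hS, mem_sphere_zero_iff_norm] at hy ⊢
    rw [reflMap_norm hw, hy]
  have himg : reflMap w '' Sp = Sm := by
    ext y
    constructor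
    · rintro ⟨z, ⟨hzS, hz⟩, rfl⟩
      simp only [mem_preimage, mem_Ioi] at hz
      refine ⟨hmemS z hzS, ?_⟩
      simp only [mem_preimage, mem_Iio]
      rw [reflMap_inner_w hw]
      linarith
    · rintro ⟨hyS, hy⟩
      simp only [mem_preimage, mem_Iio] at hy
      refine ⟨reflMap w y, ⟨⟨hmemS y hyS, ?_⟩, reflMap_invol hw y⟩⟩
      simp only [mem_preimage, mem_Ioi]
      rw [reflMap_inner_w hw]
      linarith
  -- integrability of all pieces
  have hiI1 : IntegrableOn (I x1) S μH[(n:ℝ)] :=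
    hint _ _ (hImeas x1) (hIbd x1) S subset_rfl
  have hiI2 : IntegrableOn (I x2) S μH[(n:ℝ)] :=
    hint _ _ (hImeas x2) (hIbd x2) S subset_rfl
  have hiDSp : IntegrableOn D Sp μH[(n:ℝ)] := hint _ _ hDmeas hDbd Sp hSpS
  have hiDSm : IntegrableOn D Sm μH[(n:ℝ)] := hint _ _ hDmeas hDbd Sm hSmS
  have hiDS0 : IntegrableOn D S0 μH[(n:ℝ)] := hint _ _ hDmeas hDbd S0 hS0S
  have hiDRSp : IntegrableOn DR Sp μH[(n:ℝ)] := hint _ _ hDRmeas hDRbd Sp hSpS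
  -- assemble
  have hsubint : (∫ y in S, I x2 y ∂μH[(n:ℝ)]) - (∫ y in S, I x1 y ∂μH[(n:ℝ)]) =
      ∫ y in S, D y ∂μH[(n:ℝ)] := (integral_sub hiI2 hiI1).symm
  have hsplit : (∫ y in S, D y ∂μH[(n:ℝ)]) =
      (∫ y in Sp, D y ∂μH[(n:ℝ)]) + (∫ y in Sm, D y ∂μH[(n:ℝ)]) +
        (∫ y in S0, D y ∂μH[(n:ℝ)]) := by
    calc (∫ y in S, D y ∂μH[(n:ℝ)]) = ∫ y in (Sp ∪ Sm) ∪ S0, D y ∂μH[(n:ℝ)] := by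
          rw [← hpart]
      _ = (∫ y in Sp ∪ Sm, D y ∂μH[(n:ℝ)]) + (∫ y in S0, D y ∂μH[(n:ℝ)]) :=
          setIntegral_union hdisj2 hS0m (hiDSp.union hiDSm) hiDS0
      _ = (∫ y in Sp, D y ∂μH[(n:ℝ)]) + (∫ y in Sm, D y ∂μH[(n:ℝ)]) +
            (∫ y in S0, D y ∂μH[(n:ℝ)]) := by
          rw [setIntegral_union hdisj1 hSmm hiDSp hiDSm]
  have hS0z : (∫ y in S0, D y ∂μH[(n:ℝ)]) = 0 := by
    rw [setIntegral_congr_fun hS0m (g := fun _ => (0:ℝ)) ?_, integral_zero]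
    rintro y ⟨-, hy⟩
    simp only [mem_preimage, mem_singleton_iff] at hy
    have heq : (⟪x2, y⟫ : ℝ) = ⟪x1, y⟫ := by
      have h7 := hdiff y
      have h8 : (⟪w, y⟫ : ℝ) = 0 := by rw [← real_inner_comm w y]; exact hy
      rw [h8] at h7
      linarith
    simp only [hD, hI, heq, sub_self]
  have hSm_eq : (∫ y in Sm, D y ∂μH[(n:ℝ)]) = ∫ y in Sp, DR y ∂μH[(n:ℝ)] := by
    rw [← himg]
    exact ((reflIso w hw).measurePreserving_hausdorffMeasure (n : ℝ)).setIntegral_image_emb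
      ((reflIso w hw).toHomeomorph.measurableEmbedding) D Sp
  have hpos : 0 ≤ (∫ y in Sp, D y ∂μH[(n:ℝ)]) + ∫ y in Sp, DR y ∂μH[(n:ℝ)] := by
    rw [← integral_add hiDSp hiDRSp]
    apply setIntegral_nonneg hSpm
    rintro y ⟨hyS, hyw⟩
    simp only [mem_preimage, mem_Ioi] at hyw
    have ha : (⟪x2, reflMap w y⟫ : ℝ) = ⟪x1, y⟫ := by
      rw [← reflMap_swap, hRx2]
    have hb : (⟪x1, reflMap w y⟫ : ℝ) = ⟪x2, y⟫ := by
      rw [← reflMap_swap, hRx1]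
    have hfact : D y + DR y =
        (k' ⟪x2, y⟫ - k' ⟪x1, y⟫) * (φ' ⟪y, u⟫ - φ' ⟪reflMap w y, u⟫) := by
      simp only [hD, hDR, hI, ha, hb]
      ring
    rw [hfact]
    apply mul_nonneg
    · rw [sub_nonneg]
      apply hk'mono
      have h8 := hdiff y
      have h9 : (0:ℝ) < ⟪w, y⟫ := by rw [← real_inner_comm w y]; exact hyw
      have h9' : (0:ℝ) ≤ c * ⟪w, y⟫ := mul_nonneg hcpos.le h9.le
      linarith
    · rw [sub_nonneg]
      apply hφ'mono
      have h10 := hRu y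
      have h11 : (0:ℝ) ≤ 2 * ⟪y, w⟫ * ⟪w, u⟫ :=
        mul_nonneg (mul_nonneg (by norm_num) hyw.le) hwu
      linarith
  have hfin2 : 0 ≤ (∫ y in S, I x2 y ∂μH[(n:ℝ)]) - ∫ y in S, I x1 y ∂μH[(n:ℝ)] := by
    rw [hsubint, hsplit, hS0z, hSm_eq]
    linarith [hpos]
  linarith [hfin2]

end Key

set_option maxHeartbeats 800000 in
/-- If `k` is increasing on `[-1,1]` and `f` is radial symmetric and decreasing with respect
to `u ∈ Sⁿ` (i.e. `f(x) = φ(x·u)` with `φ` increasing), then so is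
`T_k f(x) = ∫_{Sⁿ} k(x·y) f(y) dμ(y)`. -/
theorem stmt_3 (n : ℕ) (k : ℝ → ℝ) (hk : MonotoneOn k (Icc (-1 : ℝ) 1))
    (u : EuclideanSpace ℝ (Fin (n + 1))) (hu : ‖u‖ = 1)
    (f : EuclideanSpace ℝ (Fin (n + 1)) → ℝ)
    (hf : ∃ φ : ℝ → ℝ, MonotoneOn φ (Icc (-1 : ℝ) 1) ∧
      ∀ x ∈ sphere (0 : EuclideanSpace ℝ (Fin (n + 1))) 1, f x = φ ⟪x, u⟫) :
    ∃ ψ : ℝ → ℝ, MonotoneOn ψ (Icc (-1 : ℝ) 1) ∧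
      ∀ x ∈ sphere (0 : EuclideanSpace ℝ (Fin (n + 1))) 1,
        (∫ y in sphere (0 : EuclideanSpace ℝ (Fin (n + 1))) 1,
            k ⟪x, y⟫ * f y ∂μH[(n : ℝ)]) = ψ ⟪x, u⟫ := by
  obtain ⟨φ, hφ, hfφ⟩ := hf
  set S := sphere (0 : EuclideanSpace ℝ (Fin (n + 1))) 1 with hS
  set T : EuclideanSpace ℝ (Fin (n + 1)) → ℝ :=
    fun x => ∫ y in S, k ⟪x, y⟫ * f y ∂μH[(n : ℝ)] with hT
  have key : ∀ {x1 x2 : EuclideanSpace ℝ (Fin (n + 1))}, x1 ∈ S → x2 ∈ S →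
      ⟪x1, u⟫ ≤ ⟪x2, u⟫ → T x1 ≤ T x2 :=
    fun h1 h2 hle => key_mono n k hk u hu f φ hφ hfφ h1 h2 hle
  have huS : u ∈ S := by rw [hS, mem_sphere_zero_iff_norm]; exact hu
  have hmuS : -u ∈ S := by rw [hS, mem_sphere_zero_iff_norm, norm_neg]; exact hu
  have huu : (⟪u, u⟫ : ℝ) = 1 := by
    rw [real_inner_self_eq_norm_sq, hu]; norm_num
  have hmuu : (⟪-u, u⟫ : ℝ) = -1 := by rw [inner_neg_left, huu]
  have hle_u : ∀ x ∈ S, (⟪x, u⟫ : ℝ) ≤ ⟪u, u⟫ := by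
    intro x hx
    rw [huu]
    have := real_inner_le_norm x u
    rw [hu, mem_sphere_zero_iff_norm.mp hx, one_mul] at this
    exact this
  set ψ : ℝ → ℝ := fun t => sSup (T '' {x | x ∈ S ∧ ⟪x, u⟫ ≤ t}) with hψ
  have hbdd : ∀ t : ℝ, BddAbove (T '' {x | x ∈ S ∧ ⟪x, u⟫ ≤ t}) := by
    intro t
    refine ⟨T u, ?_⟩
    rintro _ ⟨x, ⟨hxS, -⟩, rfl⟩
    exact key hxS huS (hle_u x hxS)
  refine ⟨ψ, ?_, ?_⟩
  · intro s hs t ht hst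
    apply csSup_le_csSup (hbdd t)
    · exact ⟨T (-u), ⟨-u, ⟨hmuS, by rw [hmuu]; exact hs.1⟩, rfl⟩⟩
    · apply Set.image_mono
      intro x hx
      exact ⟨hx.1, le_trans hx.2 hst⟩
  · intro x hx
    show T x = ψ ⟪x, u⟫
    apply le_antisymm
    · exact le_csSup (hbdd _) ⟨x, ⟨hx, le_rfl⟩, rfl⟩
    · refine csSup_le ⟨T x, ⟨x, ⟨hx, le_rfl⟩, rfl⟩⟩ ?_
      rintro _ ⟨y, ⟨hyS, hyle⟩, rfl⟩
      exact key hyS hx hyle
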